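/- The function H(x,y) = (x² + y²)³ / (a x³ - 1)² is a first integral of the system ẋ = -y + a x³ y, ẏ = x + a x² y² on the open set where a x³ ≠ 1. -/

import Mathlib

/-- H(x,y) = (x²+y²)³/(ax³-1)² is a first integral of
ẋ = -y+ax³y, ẏ = x+ax²y² wherever ax³ ≠ 1. -/
theorem stmt_3 (a : ℝ) :
    ∀ x y : ℝ, a * x ^ 3 ≠ 1 →
      (-y + a * x ^ 3 * y) *
        deriv (fun x' : ℝ => (x' ^ 2 + y ^ 2) ^ 3 / (a * x' ^ 3 - 1) ^ 2) x
      + (x + a * x ^ 2 * y ^ 2) *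
        deriv (fun y' : ℝ => (x ^ 2 + y' ^ 2) ^ 3 / (a * x ^ 3 - 1) ^ 2) y = 0 := by
  intro x y h
  have hd : a * x ^ 3 - 1 ≠ 0 := sub_ne_zero.mpr h
  have hv : (a * x ^ 3 - 1) ^ 2 ≠ 0 := pow_ne_zero _ hd
  have h1 : HasDerivAt (fun x' : ℝ => (x' ^ 2 + y ^ 2) ^ 3 / (a * x' ^ 3 - 1) ^ 2)
      ((3 * (x ^ 2 + y ^ 2) ^ 2 * (2 * x) * (a * x ^ 3 - 1) ^ 2 -
        (x ^ 2 + y ^ 2) ^ 3 * (2 * (a * x ^ 3 - 1) * (a * (3 * x ^ 2)))) /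
        ((a * x ^ 3 - 1) ^ 2) ^ 2) x := by
    have hu : HasDerivAt (fun x' : ℝ => (x' ^ 2 + y ^ 2) ^ 3)
        (3 * (x ^ 2 + y ^ 2) ^ 2 * (2 * x)) x := by
      have := (((hasDerivAt_pow 2 x).add_const (y ^ 2)).pow 3)
      simpa [Pi.pow_def, mul_comm, mul_assoc, mul_left_comm] using this
    have hw : HasDerivAt (fun x' : ℝ => (a * x' ^ 3 - 1) ^ 2)
        (2 * (a * x ^ 3 - 1) * (a * (3 * x ^ 2))) x := by
      have := ((((hasDerivAt_pow 3 x).const_mul a).sub_const 1).pow 2)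
      simpa [Pi.pow_def, mul_comm, mul_assoc, mul_left_comm] using this
    exact hu.div hw hv
  have h2 : HasDerivAt (fun y' : ℝ => (x ^ 2 + y' ^ 2) ^ 3 / (a * x ^ 3 - 1) ^ 2)
      ((3 * (x ^ 2 + y ^ 2) ^ 2 * (2 * y)) / (a * x ^ 3 - 1) ^ 2) y := by
    have hu : HasDerivAt (fun y' : ℝ => (x ^ 2 + y' ^ 2) ^ 3)
        (3 * (x ^ 2 + y ^ 2) ^ 2 * (2 * y)) y := by
      have := (((hasDerivAt_pow 2 y).const_add (x ^ 2)).pow 3)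
      simpa [Pi.pow_def, mul_comm, mul_assoc, mul_left_comm] using this
    exact hu.div_const _
  rw [h1.deriv, h2.deriv]
  field_simp
  ring
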